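/- Let p ∈ (0,1] and let 𝒳 = B ∪ G be a partition of 𝒳 into two disjoint sets. Then for every probability measure η on 𝒳, 1/L_η(p) ≤ 2^{6/p − 3} · { γ* · sup_{e : Q(e) ≠ 0} [ (1/Q(e)) Σ_{x ∈ G, y ∈ G : e ∈ γ(x,y)} π(x)η(y) ] + 2 · ( Σ_{e ∈ ℬ} 1/Q(e) ) · ( π(B)^{2/p} + η(B)^{2/p} ) }. -/

import Mathlib

open scoped BigOperators

noncomputable section

/-- The Dirichlet form `E(f,g)`. -/
def dirichletForm {X : Type} [Fintype X] (π : X → ℝ) (k : X → X → ℝ)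
    (f g : X → ℝ) : ℝ :=
  (1 / 2) * ∑ x, ∑ y, (f x - f y) * (g x - g y) * k x y * π x * π y

/-- The sup norm `‖f‖_∞`. -/
def supNorm {X : Type} [Fintype X] (f : X → ℝ) : ℝ := ⨆ x, |f x|

/-- The generalized Poincaré constant `L_η(p)`. -/
def genPoincare {X : Type} [Fintype X] (π : X → ℝ) (k : X → X → ℝ)
    (η : X → ℝ) (p : ℝ) : ℝ :=
  sInf { r : ℝ | ∃ f : X → ℝ, f ≠ 0 ∧ (∑ x, π x * f x) = 0 ∧ (∑ x, η x * |f x|) ≠ 0 ∧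
    r = dirichletForm π k f f * supNorm f ^ ((2 - 2 * p) / p) /
      (∑ x, η x * |f x|) ^ (2 / p) }

/-- The (ordered) edges of a path given as its list of successive vertices. -/
def pathEdges {X : Type} (l : List X) : List (X × X) := l.zip l.tail

/-- The weight `Q(e) = k(x,y) π(x) π(y)` of an edge `e = (x,y)`. -/
def Qw {X : Type} (π : X → ℝ) (k : X → X → ℝ) (e : X × X) : ℝ :=
  k e.1 e.2 * π e.1 * π e.2

section AuxList

variable {X : Type}

lemma pathEdges_nil : pathEdges ([] : List X) = [] := rfl

lemma pathEdges_single (a : X) : pathEdges [a] = [] := rfl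

lemma pathEdges_cons_cons (a b : X) (t : List X) :
    pathEdges (a :: b :: t) = (a, b) :: pathEdges (b :: t) := rfl

lemma abs_sub_head_getLast_le (f : X → ℝ) :
    ∀ (l : List X) (x y : X), l.head? = some x → l.getLast? = some y →
      |f x - f y| ≤ ((pathEdges l).map fun e => |f e.1 - f e.2|).sum := by
  intro l
  induction l with
  | nil => intro x y hx _; simp at hx
  | cons a t ih =>
    intro x y hx hy
    cases t with
    | nil =>
      simp at hx hy
      subst hx; subst hy
      simp [pathEdges]
    | cons b t' =>
      simp only [List.head?_cons, Option.some.injEq] at hx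
      subst hx
      rw [List.getLast?_cons_cons] at hy
      have h2 := ih b y rfl hy
      rw [pathEdges_cons_cons]
      simp only [List.map_cons, List.sum_cons]
      calc |f a - f y| ≤ |f a - f b| + |f b - f y| := abs_sub_le _ _ _
        _ ≤ |f a - f b| + ((pathEdges (b :: t')).map fun e => |f e.1 - f e.2|).sum := by
            linarith

lemma pathEdges_nodup : ∀ {l : List X}, l.Nodup → (pathEdges l).Nodup := by
  intro l
  induction l with
  | nil => intro _; simp [pathEdges]
  | cons a t ih =>
    intro h
    cases t with
    | nil => simp [pathEdges]
    | cons b t' =>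
      rw [pathEdges_cons_cons]
      have h' : (b :: t').Nodup := (List.nodup_cons.mp h).2
      refine List.nodup_cons.mpr ⟨?_, ih h'⟩
      intro hmem
      have := (List.of_mem_zip hmem).1
      exact (List.nodup_cons.mp h).1 this

lemma pathEdges_append (a : X) : ∀ (s t : List X),
    pathEdges (s ++ a :: t) = pathEdges (s ++ [a]) ++ pathEdges (a :: t) := by
  intro s
  induction s with
  | nil => intro t; simp [pathEdges]
  | cons b s' ih =>
    intro t
    cases s' with
    | nil => simp [pathEdges]
    | cons c s'' =>
      have : (b :: c :: s'') ++ a :: t = b :: ((c :: s'') ++ a :: t) := rfl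
      rw [this, show (c :: s'') ++ a :: t = c :: (s'' ++ a :: t) from rfl,
        pathEdges_cons_cons]
      rw [show (c :: (s'' ++ a :: t)) = (c :: s'') ++ a :: t from rfl, ih t]
      rfl

lemma getLast?_append_cons (a : X) : ∀ (s t : List X),
    (s ++ a :: t).getLast? = (a :: t).getLast? := by
  intro s
  induction s with
  | nil => intro t; rfl
  | cons b s' ih =>
    intro t
    cases s' with
    | nil => simp [List.getLast?_cons_cons]
    | cons c s'' =>
      rw [show (b :: c :: s'') ++ a :: t = b :: (c :: (s'' ++ a :: t)) from rfl,
        List.getLast?_cons_cons]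
      exact ih t

lemma exists_split_of_not_nodup : ∀ (l : List X), ¬ l.Nodup →
    ∃ (a : X) (l₁ l₂ l₃ : List X), l = l₁ ++ a :: (l₂ ++ a :: l₃) := by
  intro l
  induction l with
  | nil => intro h; exact absurd List.nodup_nil h
  | cons b t ih =>
    intro h
    by_cases hb : b ∈ t
    · obtain ⟨l₂, l₃, rfl⟩ := List.append_of_mem hb
      exact ⟨b, [], l₂, l₃, rfl⟩
    · have ht : ¬ t.Nodup := fun hn => h (List.nodup_cons.mpr ⟨hb, hn⟩)
      obtain ⟨a, l₁, l₂, l₃, rfl⟩ := ih ht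
      exact ⟨a, b :: l₁, l₂, l₃, rfl⟩

lemma abs_sub_le_sum_toFinset [DecidableEq X] (f : X → ℝ) :
    ∀ (n : ℕ) (l : List X), l.length ≤ n → ∀ (x y : X), l.head? = some x →
      l.getLast? = some y →
      |f x - f y| ≤ ∑ e ∈ (pathEdges l).toFinset, |f e.1 - f e.2| := by
  intro n
  induction n with
  | zero =>
    intro l hl x y hx _
    rw [Nat.le_zero, List.length_eq_zero_iff] at hl
    subst hl; simp at hx
  | succ n ih =>
    intro l hl x y hx hy
    by_cases hnd : l.Nodup
    · rw [List.sum_toFinset _ (pathEdges_nodup hnd)]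
      exact abs_sub_head_getLast_le f l x y hx hy
    · obtain ⟨a, l₁, l₂, l₃, rfl⟩ := exists_split_of_not_nodup l hnd
      set l' : List X := l₁ ++ a :: l₃ with hl'
      have hlen : l'.length ≤ n := by
        simp only [hl', List.length_append, List.length_cons] at hl ⊢
        omega
      have hx' : l'.head? = some x := by
        rw [hl']
        cases l₁ with
        | nil => simpa using hx
        | cons b s => simpa using hx
      have hy' : l'.getLast? = some y := by
        rw [hl', getLast?_append_cons]
        rw [getLast?_append_cons a l₁ (l₂ ++ a :: l₃)] at hy
        rw [show (a :: (l₂ ++ a :: l₃)) = (a :: l₂) ++ a :: l₃ from rfl,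
          getLast?_append_cons] at hy
        exact hy
      have hsub : (pathEdges l').toFinset ⊆
          (pathEdges (l₁ ++ a :: (l₂ ++ a :: l₃))).toFinset := by
        have hsplit : pathEdges (l₁ ++ a :: (l₂ ++ a :: l₃)) =
            pathEdges (l₁ ++ [a]) ++
              (pathEdges ((a :: l₂) ++ [a]) ++ pathEdges (a :: l₃)) := by
          rw [pathEdges_append a l₁ (l₂ ++ a :: l₃)]
          congr 1
          rw [show a :: (l₂ ++ a :: l₃) = (a :: l₂) ++ a :: l₃ from rfl]
          exact pathEdges_append a (a :: l₂) l₃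
        intro e he
        rw [List.mem_toFinset] at he ⊢
        rw [hl', pathEdges_append] at he
        rw [hsplit]
        simp only [List.mem_append] at he ⊢
        tauto
      calc |f x - f y| ≤ ∑ e ∈ (pathEdges l').toFinset, |f e.1 - f e.2| :=
            ih l' hlen x y hx' hy'
        _ ≤ _ := Finset.sum_le_sum_of_subset_of_nonneg hsub
            (fun e _ _ => abs_nonneg _)

end AuxList

section AuxReal

lemma two_rpow_helper {a b q : ℝ} (ha : 0 ≤ a) (hb : 0 ≤ b) (hq : 1 ≤ q) :
    (a + b) ^ q ≤ 2 ^ (q - 1) * (a ^ q + b ^ q) := by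
  lift a to NNReal using ha
  lift b to NNReal using hb
  have h := NNReal.rpow_add_le_mul_rpow_add_rpow a b hq
  have h2 : ((((2 : NNReal) ^ (q - 1) * (a ^ q + b ^ q) : NNReal)) : ℝ) =
      2 ^ (q - 1) * ((a : ℝ) ^ q + (b : ℝ) ^ q) := by
    push_cast
    rfl
  calc ((a : ℝ) + b) ^ q = (((a + b : NNReal) : ℝ)) ^ q := by push_cast; ring_nf
    _ = (((a + b) ^ q : NNReal) : ℝ) := by rw [NNReal.coe_rpow]
    _ ≤ _ := by
        rw [← h2]
        exact_mod_cast h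

lemma rpow_split {a b c q : ℝ} (ha : 0 ≤ a) (hc : 0 ≤ c) (hq : 2 ≤ q)
    (h2 : a * a ≤ b) (h1 : a ≤ c) : a ^ q ≤ b * c ^ (q - 2) := by
  have hb : 0 ≤ b := le_trans (mul_self_nonneg a) h2
  rcases eq_or_lt_of_le ha with h | h
  · rw [← h, Real.zero_rpow (by linarith)]
    positivity
  · have : a ^ q = a ^ (2 : ℝ) * a ^ (q - 2) := by
      rw [← Real.rpow_add h]; ring_nf
    rw [this]
    have e2 : a ^ (2 : ℝ) = a * a := by
      rw [show (2 : ℝ) = ((2 : ℕ) : ℝ) by norm_num, Real.rpow_natCast, sq]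
    rw [e2]
    exact mul_le_mul h2 (Real.rpow_le_rpow ha h1 (by linarith))
      (Real.rpow_nonneg ha _) hb

lemma sq_mul_rpow {a q : ℝ} (ha : 0 ≤ a) (hq : 2 ≤ q) :
    a * a * a ^ (q - 2) = a ^ q := by
  rcases eq_or_lt_of_le ha with h | h
  · rw [← h, zero_mul, zero_mul, Real.zero_rpow (show q ≠ 0 by intro hh; rw [hh] at hq; linarith)]
  · have : a ^ q = a ^ (2 : ℝ) * a ^ (q - 2) := by
      rw [← Real.rpow_add h]; ring_nf
    rw [this, show a ^ (2 : ℝ) = a * a by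
      rw [show (2 : ℝ) = ((2 : ℕ) : ℝ) by norm_num, Real.rpow_natCast, sq]]

end AuxReal


lemma dirichletForm_nonneg {X : Type} [Fintype X] (π : X → ℝ) (k : X → X → ℝ)
    (hπ : ∀ x, 0 ≤ π x) (hk : ∀ x y, 0 ≤ k x y) (f : X → ℝ) :
    0 ≤ dirichletForm π k f f := by
  rw [dirichletForm]
  apply mul_nonneg (by norm_num)
  apply Finset.sum_nonneg; intro x _
  apply Finset.sum_nonneg; intro y _
  exact mul_nonneg (mul_nonneg (mul_nonneg (mul_self_nonneg _) (hk x y)) (hπ x)) (hπ y)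

lemma supNorm_nonneg {X : Type} [Fintype X] [Nonempty X] (f : X → ℝ) :
    0 ≤ supNorm f := by
  rw [supNorm]
  exact le_trans (abs_nonneg (f (Classical.arbitrary X)))
    (le_ciSup (Set.Finite.bddAbove (Set.finite_range fun x => |f x|))
      (Classical.arbitrary X))

lemma inf_step {S : Set ℝ} {R : ℝ} (hR : 0 ≤ R)
    (h : ∀ r ∈ S, ∃ a b : ℝ, 0 < b ∧ r = a / b ∧ b ≤ R * a ∧ 0 ≤ a) :
    1 / sInf S ≤ R := by
  rcases Set.eq_empty_or_nonempty S with rfl | hne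
  · rw [Real.sInf_empty, div_zero]; exact hR
  · obtain ⟨r0, hr0⟩ := hne
    obtain ⟨a0, b0, hb0, -, hba0, ha0⟩ := h r0 hr0
    have hRpos : 0 < R := by
      rcases hR.eq_or_lt with h' | h'
      · exfalso; rw [← h', zero_mul] at hba0; linarith
      · exact h'
    have hlow : 1 / R ≤ sInf S := by
      apply le_csInf ⟨r0, hr0⟩
      intro r hr
      obtain ⟨a, b, hb, rfl, hba, ha⟩ := h r hr
      rw [div_le_div_iff₀ hRpos hb]
      linarith
    calc 1 / sInf S ≤ 1 / (1 / R) :=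
          one_div_le_one_div_of_le (by positivity) hlow
      _ = R := one_div_one_div R

/-- The key inequality : the Nash-type bound for a single mean-zero function. -/
lemma key_ineq {X : Type} [Fintype X] [DecidableEq X] [Nonempty X]
    (π : X → ℝ) (hπpos : ∀ x, 0 < π x) (hπ1 : ∑ x, π x = 1)
    (k : X → X → ℝ) (hknn : ∀ x y, 0 ≤ k x y)
    (γ : X → X → List X)
    (hγ : ∀ x y, x ≠ y → (γ x y).head? = some x ∧ (γ x y).getLast? = some y ∧
      ∀ e ∈ pathEdges (γ x y), k e.1 e.2 ≠ 0)
    (p : ℝ) (hp : p ∈ Set.Ioc (0 : ℝ) 1)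
    (B G : Finset X) (hBG : Disjoint B G) (hcover : B ∪ G = Finset.univ)
    (η : X → ℝ) (hηnn : ∀ x, 0 ≤ η x) (hη1 : ∑ x, η x = 1)
    (f : X → ℝ) (hf : f ≠ 0) (hmean : (∑ x, π x * f x) = 0) :
    (∑ x, η x * |f x|) ^ (2 / p) ≤
      ((2 : ℝ) ^ (6 / p - 3) *
        ((sSup { r : ℝ | ∃ x y : X, x ≠ y ∧ r = ((γ x y).length - 1 : ℕ) }) *
          (sSup { r : ℝ | ∃ e : X × X, Qw π k e ≠ 0 ∧
            r = (1 / Qw π k e) *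
              ∑ x, ∑ y, if x ∈ G ∧ y ∈ G ∧ x ≠ y ∧ e ∈ pathEdges (γ x y) then
                π x * η y else 0 }) +
        2 * (∑ e : X × X,
              if ∃ x y : X, x ≠ y ∧ e ∈ pathEdges (γ x y) ∧ (x ∈ B ∨ y ∈ B) then
                1 / Qw π k e else 0) *
          ((∑ x ∈ B, π x) ^ (2 / p) + (∑ x ∈ B, η x) ^ (2 / p)))) *
      (dirichletForm π k f f * supNorm f ^ ((2 - 2 * p) / p)) := by
  classical
  obtain ⟨hp0, hp1⟩ := hp
  set q : ℝ := 2 / p with hq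
  have hq2 : (2:ℝ) ≤ q := by
    rw [hq, le_div_iff₀ hp0]; linarith
  have hQnn : ∀ e : X × X, 0 ≤ Qw π k e := fun e =>
    mul_nonneg (mul_nonneg (hknn _ _) (hπpos _).le) (hπpos _).le
  have hQpos : ∀ (x y : X), x ≠ y → ∀ e ∈ pathEdges (γ x y), 0 < Qw π k e := by
    intro x y hxy e he
    exact mul_pos (mul_pos
      (lt_of_le_of_ne (hknn _ _) (Ne.symm ((hγ x y hxy).2.2 e he))) (hπpos _)) (hπpos _)
  set S := ∑ x, η x * |f x| with hS
  have hSnn : 0 ≤ S :=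
    Finset.sum_nonneg fun x _ => mul_nonneg (hηnn x) (abs_nonneg _)
  set N := supNorm f with hN
  have hNx : ∀ x, |f x| ≤ N := by
    intro x
    rw [hN, supNorm]
    exact le_ciSup (Set.Finite.bddAbove (Set.finite_range fun x => |f x|)) x
  have hNpos : 0 < N := by
    obtain ⟨x, hx⟩ := Function.ne_iff.mp hf
    exact lt_of_lt_of_le (abs_pos.mpr (by simpa using hx)) (hNx x)
  have hdfa2N : ∀ x y : X, |f x - f y| ≤ 2 * N := by
    intro x y
    have h := abs_add_le (f x) (-(f y))
    rw [← sub_eq_add_neg, abs_neg] at h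
    linarith [hNx x, hNx y]
  set E := dirichletForm π k f f with hE
  have hsumE : ∑ e : X × X, Qw π k e * (f e.1 - f e.2) ^ 2 = 2 * E := by
    have h1 : ∑ e : X × X, Qw π k e * (f e.1 - f e.2) ^ 2
        = ∑ x, ∑ y, (f x - f y) * (f x - f y) * k x y * π x * π y := by
      rw [Fintype.sum_prod_type]
      refine Finset.sum_congr rfl fun x _ => Finset.sum_congr rfl fun y _ => ?_
      simp only [Qw]
      ring
    rw [h1, hE, dirichletForm]; ring
  have hEnn : 0 ≤ E := by
    have h : (0:ℝ) ≤ ∑ e : X × X, Qw π k e * (f e.1 - f e.2) ^ 2 :=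
      Finset.sum_nonneg fun e _ =>
        mul_nonneg (hQnn e) (sq_nonneg (f e.1 - f e.2))
    rw [hsumE] at h
    linarith
  set gstar := sSup { r : ℝ | ∃ x y : X, x ≠ y ∧ r = ((γ x y).length - 1 : ℕ) }
    with hgstar
  set A := sSup { r : ℝ | ∃ e : X × X, Qw π k e ≠ 0 ∧
      r = (1 / Qw π k e) *
        ∑ x, ∑ y, if x ∈ G ∧ y ∈ G ∧ x ≠ y ∧ e ∈ pathEdges (γ x y) then
          π x * η y else 0 } with hA
  set SB := ∑ e : X × X,
      if ∃ x y : X, x ≠ y ∧ e ∈ pathEdges (γ x y) ∧ (x ∈ B ∨ y ∈ B) then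
        1 / Qw π k e else 0 with hSB
  set P := ∑ x ∈ B, π x with hP
  set H := ∑ x ∈ B, η x with hH
  have hgbdd : BddAbove { r : ℝ | ∃ x y : X, x ≠ y ∧ r = ((γ x y).length - 1 : ℕ) } :=
    BddAbove.mono (by rintro r ⟨x, y, -, rfl⟩; exact ⟨(x, y), rfl⟩)
      (Set.finite_range fun z : X × X => (((γ z.1 z.2).length - 1 : ℕ) : ℝ)).bddAbove
  have hAbdd : BddAbove { r : ℝ | ∃ e : X × X, Qw π k e ≠ 0 ∧
      r = (1 / Qw π k e) *
        ∑ x, ∑ y, if x ∈ G ∧ y ∈ G ∧ x ≠ y ∧ e ∈ pathEdges (γ x y) then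
          π x * η y else 0 } :=
    BddAbove.mono (by rintro r ⟨e, -, rfl⟩; exact ⟨e, rfl⟩)
      (Set.finite_range fun e : X × X => (1 / Qw π k e) *
        ∑ x, ∑ y, if x ∈ G ∧ y ∈ G ∧ x ≠ y ∧ e ∈ pathEdges (γ x y) then
          π x * η y else 0).bddAbove
  have hgnn : 0 ≤ gstar := Real.sSup_nonneg (by rintro r ⟨x, y, -, rfl⟩; positivity)
  have hAnn : 0 ≤ A := Real.sSup_nonneg (by
    rintro r ⟨e, hQ, rfl⟩
    refine mul_nonneg (one_div_nonneg.mpr (hQnn e)) ?_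
    refine Finset.sum_nonneg fun x _ => Finset.sum_nonneg fun y _ => ?_
    split_ifs with h
    · exact mul_nonneg (hπpos x).le (hηnn y)
    · exact le_refl 0)
  have hSBnn : 0 ≤ SB := by
    rw [hSB]
    refine Finset.sum_nonneg fun e _ => ?_
    split_ifs with h
    · exact one_div_nonneg.mpr (hQnn e)
    · exact le_refl 0
  have hPnn : 0 ≤ P := Finset.sum_nonneg fun x _ => (hπpos x).le
  have hHnn : 0 ≤ H := Finset.sum_nonneg fun x _ => hηnn x
  have hpath : ∀ (x y : X), x ≠ y →
      |f x - f y| ≤ ∑ e ∈ (pathEdges (γ x y)).toFinset, |f e.1 - f e.2| := by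
    intro x y hxy
    exact abs_sub_le_sum_toFinset f (γ x y).length (γ x y) le_rfl x y
      (hγ x y hxy).1 (hγ x y hxy).2.1
  have hBGmem : ∀ x : X, x ∈ B ∨ x ∈ G := by
    intro x
    have := Finset.mem_univ x
    rw [← hcover, Finset.mem_union] at this
    exact this
  set c : X × X → ℝ := fun z => π z.1 * η z.2 with hc
  have hcnn : ∀ z, 0 ≤ c z := fun z => mul_nonneg (hπpos _).le (hηnn _)
  set sg : Finset (X × X) :=
    Finset.univ.filter (fun z => z.1 ∈ G ∧ z.2 ∈ G ∧ z.1 ≠ z.2) with hsg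
  set sb : Finset (X × X) :=
    Finset.univ.filter (fun z => (z.1 ∈ B ∨ z.2 ∈ B) ∧ z.1 ≠ z.2) with hsb
  set Dg := ∑ z ∈ sg, c z * |f z.1 - f z.2| with hDg
  set Db := ∑ z ∈ sb, c z * |f z.1 - f z.2| with hDb
  have hDgnn : 0 ≤ Dg :=
    Finset.sum_nonneg fun z _ => mul_nonneg (hcnn z) (abs_nonneg _)
  have hDbnn : 0 ≤ Db :=
    Finset.sum_nonneg fun z _ => mul_nonneg (hcnn z) (abs_nonneg _)
  have hcsum : ∑ z : X × X, c z = 1 := by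
    rw [Fintype.sum_prod_type]
    simp only [hc]
    calc ∑ x, ∑ y, π x * η y = ∑ x, π x * ∑ y, η y := by
          exact Finset.sum_congr rfl fun x _ => by rw [Finset.mul_sum]
      _ = 1 := by rw [hη1]; simp [hπ1]
  have hsgc : ∑ z ∈ sg, c z ≤ 1 := by
    rw [← hcsum]
    exact Finset.sum_le_sum_of_subset_of_nonneg (Finset.subset_univ _)
      fun z _ _ => hcnn z
  have hdisj : Disjoint sg sb := by
    rw [Finset.disjoint_left]
    intro z hzg hzb
    simp only [hsg, Finset.mem_filter] at hzg
    simp only [hsb, Finset.mem_filter] at hzb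
    rcases hzb.2.1 with h | h
    · exact (Finset.disjoint_left.mp hBG) h hzg.2.1
    · exact (Finset.disjoint_left.mp hBG) h hzg.2.2.1
  have hSle : S ≤ Dg + Db := by
    have h1 : ∀ y, |f y| ≤ ∑ x, π x * |f x - f y| := by
      intro y
      have hfy : f y = ∑ x, π x * (f y - f x) := by
        calc f y = (∑ x, π x) * f y - ∑ x, π x * f x := by rw [hπ1, hmean]; ring
          _ = ∑ x, (π x * f y - π x * f x) := by
              rw [Finset.sum_sub_distrib, Finset.sum_mul]
          _ = ∑ x, π x * (f y - f x) :=
              Finset.sum_congr rfl fun x _ => by ring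
      calc |f y| = |∑ x, π x * (f y - f x)| := by rw [← hfy]
        _ ≤ ∑ x, |π x * (f y - f x)| := Finset.abs_sum_le_sum_abs _ _
        _ = ∑ x, π x * |f x - f y| := Finset.sum_congr rfl fun x _ => by
            rw [abs_mul, abs_of_pos (hπpos x), abs_sub_comm]
    have h2 : S ≤ ∑ z : X × X, c z * |f z.1 - f z.2| := by
      rw [hS]
      calc ∑ y, η y * |f y| ≤ ∑ y, η y * ∑ x, π x * |f x - f y| :=
            Finset.sum_le_sum fun y _ =>
              mul_le_mul_of_nonneg_left (h1 y) (hηnn y)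
        _ = ∑ z : X × X, c z * |f z.1 - f z.2| := by
            rw [Fintype.sum_prod_type, Finset.sum_comm]
            refine Finset.sum_congr rfl fun y _ => ?_
            rw [Finset.mul_sum]
            exact Finset.sum_congr rfl fun x _ => by simp only [hc]; ring
    have h3 : ∑ z : X × X, c z * |f z.1 - f z.2| = Dg + Db := by
      rw [hDg, hDb, ← Finset.sum_union hdisj]
      symm
      apply Finset.sum_subset (Finset.subset_univ _)
      intro z _ hz
      have hzz : z.1 = z.2 := by
        by_contra hne
        apply hz
        rw [Finset.mem_union]
        rcases hBGmem z.1 with h | h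
        · right; simp only [hsb, Finset.mem_filter, Finset.mem_univ, true_and]
          exact ⟨Or.inl h, hne⟩
        · rcases hBGmem z.2 with h' | h'
          · right; simp only [hsb, Finset.mem_filter, Finset.mem_univ, true_and]
            exact ⟨Or.inr h', hne⟩
          · left; simp only [hsg, Finset.mem_filter, Finset.mem_univ, true_and]
            exact ⟨h, h', hne⟩
      rw [hzz]
      simp
    linarith [h2, h3.symm.le, h3.le]
  have hDg2N : Dg ≤ 2 * N := by
    calc Dg ≤ ∑ z ∈ sg, c z * (2 * N) :=
          Finset.sum_le_sum fun z _ =>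
            mul_le_mul_of_nonneg_left (hdfa2N _ _) (hcnn z)
      _ = (∑ z ∈ sg, c z) * (2 * N) := by rw [← Finset.sum_mul]
      _ ≤ 1 * (2 * N) := mul_le_mul_of_nonneg_right hsgc (by linarith)
      _ = 2 * N := one_mul _
  have hsbc : ∑ z ∈ sb, c z ≤ P + H := by
    have step : ∑ z ∈ sb, c z ≤ ∑ z : X × X,
        ((if z.1 ∈ B then c z else 0) + (if z.1 ∉ B ∧ z.2 ∈ B then c z else 0)) := by
      rw [hsb, Finset.sum_filter]
      refine Finset.sum_le_sum fun z _ => ?_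
      by_cases h1 : z.1 ∈ B
      · by_cases hcnd : (z.1 ∈ B ∨ z.2 ∈ B) ∧ z.1 ≠ z.2
        · rw [if_pos hcnd, if_pos h1]
          have h0 : (0:ℝ) ≤ if z.1 ∉ B ∧ z.2 ∈ B then c z else 0 := by
            split_ifs
            exacts [hcnn z, le_refl 0]
          linarith
        · rw [if_neg hcnd, if_pos h1]
          have h0 : (0:ℝ) ≤ if z.1 ∉ B ∧ z.2 ∈ B then c z else 0 := by
            split_ifs
            exacts [hcnn z, le_refl 0]
          linarith [hcnn z]
      · by_cases hcnd : (z.1 ∈ B ∨ z.2 ∈ B) ∧ z.1 ≠ z.2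
        · have h2B : z.2 ∈ B := by
            rcases hcnd.1 with h | h
            · exact absurd h h1
            · exact h
          rw [if_pos hcnd, if_neg h1, if_pos ⟨h1, h2B⟩]
          linarith
        · rw [if_neg hcnd, if_neg h1]
          have h0 : (0:ℝ) ≤ if z.1 ∉ B ∧ z.2 ∈ B then c z else 0 := by
            split_ifs
            exacts [hcnn z, le_refl 0]
          linarith
    have hPart1 : ∑ z : X × X, (if z.1 ∈ B then c z else 0) = P := by
      rw [Fintype.sum_prod_type]
      have hx : ∀ x : X, ∑ y, (if x ∈ B then c (x, y) else 0)
          = if x ∈ B then π x else 0 := by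
        intro x
        by_cases h : x ∈ B <;> simp [hc, h, ← Finset.mul_sum, hη1]
      rw [Finset.sum_congr rfl fun x _ => hx x, hP, Finset.sum_ite_mem,
        Finset.univ_inter]
    have hPart2 : ∑ z : X × X, (if z.1 ∉ B ∧ z.2 ∈ B then c z else 0) ≤ H := by
      have hpt : ∀ z : X × X, (if z.1 ∉ B ∧ z.2 ∈ B then c z else 0)
          ≤ (if z.2 ∈ B then c z else 0) := by
        intro z
        split_ifs with h1 h2
        · exact le_refl _
        · exact absurd h1.2 h2
        · exact hcnn z
        · exact le_refl 0
      calc ∑ z : X × X, (if z.1 ∉ B ∧ z.2 ∈ B then c z else 0)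
          ≤ ∑ z : X × X, (if z.2 ∈ B then c z else 0) :=
            Finset.sum_le_sum fun z _ => hpt z
        _ = H := by
            rw [Fintype.sum_prod_type]
            have hx : ∀ x : X, ∑ y, (if y ∈ B then c (x, y) else 0) = π x * H := by
              intro x
              rw [hH, Finset.mul_sum, ← Finset.univ_inter B, ← Finset.sum_ite_mem]
              exact Finset.sum_congr rfl fun y _ => by
                by_cases h : y ∈ B <;> simp [hc, h]
            rw [Finset.sum_congr rfl fun x _ => hx x, ← Finset.sum_mul, hπ1,
              one_mul]
    calc ∑ z ∈ sb, c z ≤ _ := step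
      _ = (∑ z : X × X, (if z.1 ∈ B then c z else 0))
          + ∑ z : X × X, (if z.1 ∉ B ∧ z.2 ∈ B then c z else 0) :=
            Finset.sum_add_distrib
      _ ≤ P + H := by
          rw [hPart1]
          exact add_le_add le_rfl hPart2
  have hbadK : ∀ z : X × X, z ∈ sb →
      |f z.1 - f z.2| * |f z.1 - f z.2| ≤ SB * (2 * E) := by
    intro z hz
    have hzprop := (Finset.mem_filter.mp hz).2
    obtain ⟨hzB, hzne⟩ := hzprop
    have h1 := hpath z.1 z.2 hzne
    have hFpos : ∀ e ∈ (pathEdges (γ z.1 z.2)).toFinset, 0 < Qw π k e :=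
      fun e he => hQpos _ _ hzne e (List.mem_toFinset.mp he)
    have h2 : (∑ e ∈ (pathEdges (γ z.1 z.2)).toFinset, |f e.1 - f e.2|) ^ 2 ≤
        (∑ e ∈ (pathEdges (γ z.1 z.2)).toFinset, 1 / Qw π k e) *
        (∑ e ∈ (pathEdges (γ z.1 z.2)).toFinset, Qw π k e * (f e.1 - f e.2) ^ 2) := by
      refine Finset.sum_sq_le_sum_mul_sum_of_sq_eq_mul _
        (fun e he => one_div_nonneg.mpr (hFpos e he).le)
        (fun e _ => mul_nonneg (hQnn e) (sq_nonneg _)) (fun e he => ?_)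
      rw [sq_abs, one_div, inv_mul_cancel_left₀ (hFpos e he).ne']
    have h3 : ∑ e ∈ (pathEdges (γ z.1 z.2)).toFinset, 1 / Qw π k e ≤ SB := by
      rw [hSB]
      have hcg : ∀ e ∈ (pathEdges (γ z.1 z.2)).toFinset, (1 : ℝ) / Qw π k e =
          if ∃ x y : X, x ≠ y ∧ e ∈ pathEdges (γ x y) ∧ (x ∈ B ∨ y ∈ B) then
            1 / Qw π k e else 0 := by
        intro e he
        rw [if_pos ⟨z.1, z.2, hzne, List.mem_toFinset.mp he, hzB⟩]
      rw [Finset.sum_congr rfl hcg]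
      refine Finset.sum_le_sum_of_subset_of_nonneg (Finset.subset_univ _)
        fun e _ _ => ?_
      split_ifs with h
      · exact one_div_nonneg.mpr (hQnn e)
      · exact le_refl 0
    have h4 : ∑ e ∈ (pathEdges (γ z.1 z.2)).toFinset,
        Qw π k e * (f e.1 - f e.2) ^ 2 ≤ 2 * E := by
      rw [← hsumE]
      exact Finset.sum_le_sum_of_subset_of_nonneg (Finset.subset_univ _)
        fun e _ _ => mul_nonneg (hQnn e) (sq_nonneg _)
    have h5 : (0:ℝ) ≤ ∑ e ∈ (pathEdges (γ z.1 z.2)).toFinset, |f e.1 - f e.2| :=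
      Finset.sum_nonneg fun e _ => abs_nonneg _
    calc |f z.1 - f z.2| * |f z.1 - f z.2|
        ≤ (∑ e ∈ (pathEdges (γ z.1 z.2)).toFinset, |f e.1 - f e.2|) *
          (∑ e ∈ (pathEdges (γ z.1 z.2)).toFinset, |f e.1 - f e.2|) :=
          mul_le_mul h1 h1 (abs_nonneg _) h5
      _ = (∑ e ∈ (pathEdges (γ z.1 z.2)).toFinset, |f e.1 - f e.2|) ^ 2 :=
          (sq _).symm
      _ ≤ (∑ e ∈ (pathEdges (γ z.1 z.2)).toFinset, 1 / Qw π k e) *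
          (∑ e ∈ (pathEdges (γ z.1 z.2)).toFinset, Qw π k e * (f e.1 - f e.2) ^ 2) := h2
      _ ≤ SB * (2 * E) := mul_le_mul h3 h4
          (Finset.sum_nonneg fun e _ => mul_nonneg (hQnn e) (sq_nonneg _)) hSBnn
  have hDb2N : Db ≤ 2 * N * (P + H) := by
    calc Db ≤ ∑ z ∈ sb, c z * (2 * N) :=
          Finset.sum_le_sum fun z _ =>
            mul_le_mul_of_nonneg_left (hdfa2N _ _) (hcnn z)
      _ = (∑ z ∈ sb, c z) * (2 * N) := by rw [← Finset.sum_mul]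
      _ ≤ (P + H) * (2 * N) := mul_le_mul_of_nonneg_right hsbc (by linarith)
      _ = 2 * N * (P + H) := by ring
  have hDbsq : Db * Db ≤ (P + H) * (P + H) * (SB * (2 * E)) := by
    have cs : Db ^ 2 ≤ (∑ z ∈ sb, c z) *
        (∑ z ∈ sb, c z * |f z.1 - f z.2| ^ 2) := by
      rw [hDb]
      exact Finset.sum_sq_le_sum_mul_sum_of_sq_eq_mul sb (fun z _ => hcnn z)
        (fun z _ => mul_nonneg (hcnn z) (sq_nonneg _)) (fun z _ => by ring)
    have h6 : ∑ z ∈ sb, c z * |f z.1 - f z.2| ^ 2 ≤ (P + H) * (SB * (2 * E)) := by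
      calc ∑ z ∈ sb, c z * |f z.1 - f z.2| ^ 2
          ≤ ∑ z ∈ sb, c z * (SB * (2 * E)) :=
            Finset.sum_le_sum fun z hz => mul_le_mul_of_nonneg_left
              (by rw [sq]; exact hbadK z hz) (hcnn z)
        _ = (∑ z ∈ sb, c z) * (SB * (2 * E)) := by rw [← Finset.sum_mul]
        _ ≤ (P + H) * (SB * (2 * E)) := mul_le_mul_of_nonneg_right hsbc
            (mul_nonneg hSBnn (by linarith))
    calc Db * Db = Db ^ 2 := (sq _).symm
      _ ≤ (∑ z ∈ sb, c z) * (∑ z ∈ sb, c z * |f z.1 - f z.2| ^ 2) := cs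
      _ ≤ (P + H) * ((P + H) * (SB * (2 * E))) := mul_le_mul hsbc h6
          (Finset.sum_nonneg fun z _ => mul_nonneg (hcnn z) (sq_nonneg _))
          (by linarith)
      _ = (P + H) * (P + H) * (SB * (2 * E)) := by ring
  set w : X × X → ℝ :=
    fun e => ∑ z ∈ sg, if e ∈ pathEdges (γ z.1 z.2) then c z else 0 with hw
  have hwnn : ∀ e, 0 ≤ w e := by
    intro e
    rw [hw]
    refine Finset.sum_nonneg fun z _ => ?_
    split_ifs
    exacts [hcnn z, le_refl 0]
  have hite : ∀ (z e : X × X),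
      (if e ∈ pathEdges (γ z.1 z.2) then c z else 0) * |f e.1 - f e.2| =
      if e ∈ (pathEdges (γ z.1 z.2)).toFinset then c z * |f e.1 - f e.2| else 0 := by
    intro z e
    by_cases h : e ∈ pathEdges (γ z.1 z.2)
    · rw [if_pos h, if_pos (List.mem_toFinset.mpr h)]
    · rw [if_neg h, if_neg fun hh => h (List.mem_toFinset.mp hh), zero_mul]
  have hDgW : Dg ≤ ∑ e : X × X, w e * |f e.1 - f e.2| := by
    have per : ∀ z : X × X,
        ∑ e : X × X, (if e ∈ pathEdges (γ z.1 z.2) then c z else 0) * |f e.1 - f e.2|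
        = c z * ∑ e ∈ (pathEdges (γ z.1 z.2)).toFinset, |f e.1 - f e.2| := by
      intro z
      rw [Finset.mul_sum, ← Finset.univ_inter (pathEdges (γ z.1 z.2)).toFinset,
        ← Finset.sum_ite_mem]
      exact Finset.sum_congr rfl fun e _ => hite z e
    have step1 : Dg ≤ ∑ z ∈ sg, c z *
        ∑ e ∈ (pathEdges (γ z.1 z.2)).toFinset, |f e.1 - f e.2| := by
      rw [hDg]
      refine Finset.sum_le_sum fun z hz => ?_
      have hzne : z.1 ≠ z.2 := (Finset.mem_filter.mp hz).2.2.2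
      exact mul_le_mul_of_nonneg_left (hpath z.1 z.2 hzne) (hcnn z)
    have step2 : ∑ z ∈ sg, c z *
        ∑ e ∈ (pathEdges (γ z.1 z.2)).toFinset, |f e.1 - f e.2|
        = ∑ e : X × X, w e * |f e.1 - f e.2| := by
      calc ∑ z ∈ sg, c z * ∑ e ∈ (pathEdges (γ z.1 z.2)).toFinset, |f e.1 - f e.2|
          = ∑ z ∈ sg, ∑ e : X × X,
            (if e ∈ pathEdges (γ z.1 z.2) then c z else 0) * |f e.1 - f e.2| :=
            Finset.sum_congr rfl fun z _ => (per z).symm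
        _ = ∑ e : X × X, ∑ z ∈ sg,
            (if e ∈ pathEdges (γ z.1 z.2) then c z else 0) * |f e.1 - f e.2| :=
            Finset.sum_comm
        _ = ∑ e : X × X, w e * |f e.1 - f e.2| := by
            refine Finset.sum_congr rfl fun e _ => ?_
            rw [hw, Finset.sum_mul]
    linarith [step1, step2.le, step2.symm.le]
  have hwQ : ∀ e : X × X, w e ≤ A * Qw π k e := by
    intro e
    by_cases hwe : w e = 0
    · rw [hwe]
      exact mul_nonneg hAnn (hQnn e)
    · rw [hw] at hwe
      obtain ⟨z, hzsg, hznz⟩ := Finset.exists_ne_zero_of_sum_ne_zero hwe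
      have hmem : e ∈ pathEdges (γ z.1 z.2) := by
        by_contra h
        rw [if_neg h] at hznz
        exact hznz rfl
      have hzne : z.1 ≠ z.2 := (Finset.mem_filter.mp hzsg).2.2.2
      have hQe : 0 < Qw π k e := hQpos z.1 z.2 hzne e hmem
      have hDS : w e = ∑ x, ∑ y,
          if x ∈ G ∧ y ∈ G ∧ x ≠ y ∧ e ∈ pathEdges (γ x y) then π x * η y else 0 := by
        simp only [hw, hsg]
        rw [Finset.sum_filter, Fintype.sum_prod_type]
        refine Finset.sum_congr rfl fun x _ => Finset.sum_congr rfl fun y _ => ?_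
        by_cases h1 : x ∈ G ∧ y ∈ G ∧ x ≠ y
        · by_cases h2 : e ∈ pathEdges (γ x y)
          · rw [if_pos h1, if_pos h2, if_pos ⟨h1.1, h1.2.1, h1.2.2, h2⟩]
          · rw [if_pos h1, if_neg h2, if_neg (by tauto)]
        · rw [if_neg h1, if_neg (by tauto)]
      have hle : (1 / Qw π k e) * w e ≤ A := by
        rw [hA]
        exact le_csSup hAbdd ⟨e, ne_of_gt hQe, by rw [hDS]⟩
      calc w e = Qw π k e * ((1 / Qw π k e) * w e) := by
            rw [one_div, mul_inv_cancel_left₀ hQe.ne']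
        _ ≤ Qw π k e * A := mul_le_mul_of_nonneg_left hle hQe.le
        _ = A * Qw π k e := mul_comm _ _
  have hsumw : ∑ e : X × X, w e ≤ gstar := by
    have swap : ∑ e : X × X, w e =
        ∑ z ∈ sg, c z * ((pathEdges (γ z.1 z.2)).toFinset.card : ℝ) := by
      simp only [hw]
      rw [Finset.sum_comm]
      refine Finset.sum_congr rfl fun z _ => ?_
      calc ∑ e : X × X, (if e ∈ pathEdges (γ z.1 z.2) then c z else 0)
          = ∑ e ∈ (pathEdges (γ z.1 z.2)).toFinset, c z := by
            rw [← Finset.univ_inter (pathEdges (γ z.1 z.2)).toFinset,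
              ← Finset.sum_ite_mem]
            refine Finset.sum_congr rfl fun e _ => ?_
            by_cases h : e ∈ pathEdges (γ z.1 z.2)
            · rw [if_pos h, if_pos (List.mem_toFinset.mpr h)]
            · rw [if_neg h, if_neg fun hh => h (List.mem_toFinset.mp hh)]
        _ = ((pathEdges (γ z.1 z.2)).toFinset.card : ℝ) * c z := by
            rw [Finset.sum_const, nsmul_eq_mul]
        _ = c z * ((pathEdges (γ z.1 z.2)).toFinset.card : ℝ) := mul_comm _ _
    rw [swap]
    have hcard : ∀ z ∈ sg, ((pathEdges (γ z.1 z.2)).toFinset.card : ℝ) ≤ gstar := by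
      intro z hz
      have hzne : z.1 ≠ z.2 := (Finset.mem_filter.mp hz).2.2.2
      have hc1 : (pathEdges (γ z.1 z.2)).toFinset.card ≤ (γ z.1 z.2).length - 1 := by
        refine le_trans (pathEdges (γ z.1 z.2)).toFinset_card_le ?_
        rw [pathEdges, List.length_zip, List.length_tail]
        exact min_le_right _ _
      have hc2 : (((γ z.1 z.2).length - 1 : ℕ) : ℝ) ≤ gstar := by
        rw [hgstar]
        exact le_csSup hgbdd ⟨z.1, z.2, hzne, rfl⟩
      exact le_trans (by exact_mod_cast hc1) hc2
    calc ∑ z ∈ sg, c z * ((pathEdges (γ z.1 z.2)).toFinset.card : ℝ)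
        ≤ ∑ z ∈ sg, c z * gstar := Finset.sum_le_sum fun z hz =>
          mul_le_mul_of_nonneg_left (hcard z hz) (hcnn z)
      _ = (∑ z ∈ sg, c z) * gstar := by rw [← Finset.sum_mul]
      _ ≤ 1 * gstar := mul_le_mul_of_nonneg_right hsgc hgnn
      _ = gstar := one_mul _
  have hDgsq : Dg * Dg ≤ gstar * A * (2 * E) := by
    have hWnn : 0 ≤ ∑ e : X × X, w e * |f e.1 - f e.2| :=
      Finset.sum_nonneg fun e _ => mul_nonneg (hwnn e) (abs_nonneg _)
    have cs : (∑ e : X × X, w e * |f e.1 - f e.2|) ^ 2 ≤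
        (∑ e : X × X, w e) * (∑ e : X × X, w e * |f e.1 - f e.2| ^ 2) :=
      Finset.sum_sq_le_sum_mul_sum_of_sq_eq_mul Finset.univ (fun e _ => hwnn e)
        (fun e _ => mul_nonneg (hwnn e) (sq_nonneg _)) (fun e _ => by ring)
    have h7 : ∑ e : X × X, w e * |f e.1 - f e.2| ^ 2 ≤ A * (2 * E) := by
      calc ∑ e : X × X, w e * |f e.1 - f e.2| ^ 2
          ≤ ∑ e : X × X, (A * Qw π k e) * |f e.1 - f e.2| ^ 2 :=
            Finset.sum_le_sum fun e _ =>
              mul_le_mul_of_nonneg_right (hwQ e) (sq_nonneg _)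
        _ = A * ∑ e : X × X, Qw π k e * (f e.1 - f e.2) ^ 2 := by
            rw [Finset.mul_sum]
            exact Finset.sum_congr rfl fun e _ => by rw [sq_abs]; ring
        _ = A * (2 * E) := by rw [hsumE]
    calc Dg * Dg ≤ (∑ e : X × X, w e * |f e.1 - f e.2|) *
          (∑ e : X × X, w e * |f e.1 - f e.2|) := mul_le_mul hDgW hDgW hDgnn hWnn
      _ = (∑ e : X × X, w e * |f e.1 - f e.2|) ^ 2 := (sq _).symm
      _ ≤ (∑ e : X × X, w e) * (∑ e : X × X, w e * |f e.1 - f e.2| ^ 2) := cs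
      _ ≤ gstar * (A * (2 * E)) := mul_le_mul hsumw h7
          (Finset.sum_nonneg fun e _ => mul_nonneg (hwnn e) (sq_nonneg _)) hgnn
      _ = gstar * A * (2 * E) := by ring
  -- final assembly
  have eq1 : (2 - 2 * p) / p = q - 2 := by
    rw [hq]
    field_simp
  have eq2 : (6 / p - 3 : ℝ) = 3 * q - 3 := by
    rw [hq]
    ring
  rw [eq1, eq2]
  have step1 : S ^ q ≤ (Dg + Db) ^ q := Real.rpow_le_rpow hSnn hSle (by linarith)
  have step2 : (Dg + Db) ^ q ≤ 2 ^ (q - 1) * (Dg ^ q + Db ^ q) :=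
    two_rpow_helper hDgnn hDbnn (by linarith)
  have step3 : Dg ^ q ≤ (gstar * A * (2 * E)) * (2 * N) ^ (q - 2) :=
    rpow_split hDgnn (by linarith) hq2 hDgsq hDg2N
  have step4 : Db ^ q ≤ ((P + H) * (P + H) * (SB * (2 * E))) *
      (2 * N * (P + H)) ^ (q - 2) :=
    rpow_split hDbnn (mul_nonneg (by linarith) (by linarith)) hq2 hDbsq hDb2N
  have hm1 : (2 * N * (P + H)) ^ (q - 2) = (2 * N) ^ (q - 2) * (P + H) ^ (q - 2) :=
    Real.mul_rpow (by linarith) (by linarith)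
  have hm2 : (P + H) * (P + H) * (P + H) ^ (q - 2) = (P + H) ^ q :=
    sq_mul_rpow (by linarith) hq2
  have step4' : Db ^ q ≤ (P + H) ^ q * (SB * (2 * E)) * (2 * N) ^ (q - 2) := by
    calc Db ^ q ≤ ((P + H) * (P + H) * (SB * (2 * E))) *
          ((2 * N) ^ (q - 2) * (P + H) ^ (q - 2)) := by rw [← hm1]; exact step4
      _ = ((P + H) * (P + H) * (P + H) ^ (q - 2)) * (SB * (2 * E)) *
          (2 * N) ^ (q - 2) := by ring
      _ = (P + H) ^ q * (SB * (2 * E)) * (2 * N) ^ (q - 2) := by rw [hm2]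
  have step5 : (P + H) ^ q ≤ 2 ^ (q - 1) * (P ^ q + H ^ q) :=
    two_rpow_helper hPnn hHnn (by linarith)
  have h2N : (2 * N) ^ (q - 2) = 2 ^ (q - 2) * N ^ (q - 2) :=
    Real.mul_rpow (by norm_num) (by linarith)
  have htwo : ∀ a b : ℝ, (2:ℝ) ^ a * (2:ℝ) ^ b = 2 ^ (a + b) := fun a b =>
    (Real.rpow_add two_pos a b).symm
  have hNq2 : (0:ℝ) ≤ N ^ (q - 2) := Real.rpow_nonneg (by linarith) _
  have h2q2 : (0:ℝ) ≤ (2:ℝ) ^ (q - 2) := Real.rpow_nonneg (by norm_num) _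
  have h2q1 : (0:ℝ) ≤ (2:ℝ) ^ (q - 1) := Real.rpow_nonneg (by norm_num) _
  have bound1 : 2 ^ (q - 1) * Dg ^ q ≤
      2 ^ (3 * q - 3) * (gstar * A) * (E * N ^ (q - 2)) := by
    calc 2 ^ (q - 1) * Dg ^ q
        ≤ 2 ^ (q - 1) * ((gstar * A * (2 * E)) * ((2:ℝ) ^ (q - 2) * N ^ (q - 2))) := by
          rw [← h2N]
          exact mul_le_mul_of_nonneg_left step3 h2q1
      _ = (2 ^ (q - 1) * (2 ^ (q - 2) * 2 ^ (1:ℝ))) * (gstar * A) * (E * N ^ (q - 2)) := by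
          rw [Real.rpow_one]
          ring
      _ = 2 ^ (2 * q - 2) * (gstar * A) * (E * N ^ (q - 2)) := by
          rw [htwo, htwo, show (q - 1 + (q - 2 + 1) : ℝ) = 2 * q - 2 from by ring]
      _ ≤ 2 ^ (3 * q - 3) * (gstar * A) * (E * N ^ (q - 2)) := by
          apply mul_le_mul_of_nonneg_right
          · apply mul_le_mul_of_nonneg_right
            · exact Real.rpow_le_rpow_of_exponent_le (by norm_num) (by linarith)
            · exact mul_nonneg hgnn hAnn
          · exact mul_nonneg hEnn hNq2
  have bound2 : 2 ^ (q - 1) * Db ^ q ≤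
      2 ^ (3 * q - 3) * (2 * SB * (P ^ q + H ^ q)) * (E * N ^ (q - 2)) := by
    have hstep : Db ^ q ≤ (2 ^ (q - 1) * (P ^ q + H ^ q)) * (SB * (2 * E)) *
        (2 * N) ^ (q - 2) := by
      refine le_trans step4' ?_
      apply mul_le_mul_of_nonneg_right
      · exact mul_le_mul_of_nonneg_right step5
          (mul_nonneg hSBnn (by linarith))
      · rw [h2N]; exact mul_nonneg h2q2 hNq2
    calc 2 ^ (q - 1) * Db ^ q
        ≤ 2 ^ (q - 1) * ((2 ^ (q - 1) * (P ^ q + H ^ q)) * (SB * (2 * E)) *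
          ((2:ℝ) ^ (q - 2) * N ^ (q - 2))) := by
          rw [← h2N]
          exact mul_le_mul_of_nonneg_left hstep h2q1
      _ = (2 ^ (q - 1) * (2 ^ (q - 1) * (2 ^ (q - 2) * 2 ^ (1:ℝ)))) *
          (2 * SB * (P ^ q + H ^ q)) * (E * N ^ (q - 2)) / 2 := by
          rw [Real.rpow_one]
          ring
      _ ≤ 2 ^ (3 * q - 3) * (2 * SB * (P ^ q + H ^ q)) * (E * N ^ (q - 2)) := by
          rw [htwo, htwo, htwo,
            show (q - 1 + (q - 1 + (q - 2 + 1)) : ℝ) = 3 * q - 3 from by ring]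
          have hx : (0:ℝ) ≤ 2 ^ (3 * q - 3) * (2 * SB * (P ^ q + H ^ q)) *
              (E * N ^ (q - 2)) := by
            apply mul_nonneg
            · apply mul_nonneg (Real.rpow_nonneg (by norm_num) _)
              apply mul_nonneg (mul_nonneg (by norm_num) hSBnn)
              exact add_nonneg (Real.rpow_nonneg hPnn _) (Real.rpow_nonneg hHnn _)
            · exact mul_nonneg hEnn hNq2
          linarith
  calc S ^ q ≤ (Dg + Db) ^ q := step1
    _ ≤ 2 ^ (q - 1) * (Dg ^ q + Db ^ q) := step2
    _ = 2 ^ (q - 1) * Dg ^ q + 2 ^ (q - 1) * Db ^ q := by ring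
    _ ≤ 2 ^ (3 * q - 3) * (gstar * A) * (E * N ^ (q - 2)) +
        2 ^ (3 * q - 3) * (2 * SB * (P ^ q + H ^ q)) * (E * N ^ (q - 2)) :=
        add_le_add bound1 bound2
    _ = 2 ^ (3 * q - 3) * (gstar * A + 2 * SB * (P ^ q + H ^ q)) *
        (E * N ^ (q - 2)) := by ring


theorem statement6 {X : Type} [Fintype X] [DecidableEq X] [Nonempty X]
    (π : X → ℝ) (hπpos : ∀ x, 0 < π x) (hπ1 : ∑ x, π x = 1)
    (k : X → X → ℝ) (hknn : ∀ x y, 0 ≤ k x y) (hksymm : ∀ x y, k x y = k y x)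
    (hconn : (SimpleGraph.fromRel fun x y => k x y ≠ 0).Connected)
    -- a choice of a path `γ x y` from `x` to `y` for each pair of distinct points
    (γ : X → X → List X)
    (hγ : ∀ x y, x ≠ y → (γ x y).head? = some x ∧ (γ x y).getLast? = some y ∧
      ∀ e ∈ pathEdges (γ x y), k e.1 e.2 ≠ 0)
    (p : ℝ) (hp : p ∈ Set.Ioc (0 : ℝ) 1)
    -- a partition of the state space into a bad set `B` and a good set `G`
    (B G : Finset X) (hBG : Disjoint B G) (hcover : B ∪ G = Finset.univ)
    (η : X → ℝ) (hηnn : ∀ x, 0 ≤ η x) (hη1 : ∑ x, η x = 1) :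
    1 / genPoincare π k η p ≤
      (2 : ℝ) ^ (6 / p - 3) *
        ((sSup { r : ℝ | ∃ x y : X, x ≠ y ∧ r = ((γ x y).length - 1 : ℕ) }) *
          (sSup { r : ℝ | ∃ e : X × X, Qw π k e ≠ 0 ∧
            r = (1 / Qw π k e) *
              ∑ x, ∑ y, if x ∈ G ∧ y ∈ G ∧ x ≠ y ∧ e ∈ pathEdges (γ x y) then
                π x * η y else 0 }) +
        2 * (∑ e : X × X,
              if ∃ x y : X, x ≠ y ∧ e ∈ pathEdges (γ x y) ∧ (x ∈ B ∨ y ∈ B) then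
                1 / Qw π k e else 0) *
          ((∑ x ∈ B, π x) ^ (2 / p) + (∑ x ∈ B, η x) ^ (2 / p))) := by
  classical
  rw [genPoincare]
  refine inf_step ?_ ?_
  · apply mul_nonneg (Real.rpow_nonneg (by norm_num) _)
    apply add_nonneg
    · apply mul_nonneg
      · apply Real.sSup_nonneg
        rintro r ⟨x, y, -, rfl⟩
        positivity
      · apply Real.sSup_nonneg
        rintro r ⟨e, hQ, rfl⟩
        apply mul_nonneg
        · exact one_div_nonneg.mpr
            (mul_nonneg (mul_nonneg (hknn _ _) (hπpos _).le) (hπpos _).le)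
        · apply Finset.sum_nonneg; intro x _
          apply Finset.sum_nonneg; intro y _
          split_ifs with h
          · exact mul_nonneg (hπpos x).le (hηnn y)
          · exact le_refl 0
    · apply mul_nonneg
      · apply mul_nonneg (by norm_num)
        apply Finset.sum_nonneg; intro e _
        split_ifs with h
        · obtain ⟨x, y, hxy, hmem, -⟩ := h
          have hk : k e.1 e.2 ≠ 0 := (hγ x y hxy).2.2 e hmem
          apply one_div_nonneg.mpr
          exact mul_nonneg (mul_nonneg (hknn _ _) (hπpos _).le) (hπpos _).le
        · exact le_refl 0
      · exact add_nonneg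
          (Real.rpow_nonneg (Finset.sum_nonneg fun x _ => (hπpos x).le) _)
          (Real.rpow_nonneg (Finset.sum_nonneg fun x _ => hηnn x) _)
  · rintro r ⟨f, hf, hmean, hS, rfl⟩
    have hSpos : 0 < ∑ x, η x * |f x| :=
      lt_of_le_of_ne
        (Finset.sum_nonneg fun x _ => mul_nonneg (hηnn x) (abs_nonneg _))
        (Ne.symm hS)
    exact ⟨_, _, Real.rpow_pos_of_pos hSpos _, rfl,
      key_ineq π hπpos hπ1 k hknn γ hγ p hp B G hBG hcover η hηnn hη1 f hf hmean,
      mul_nonneg (dirichletForm_nonneg π k (fun x => (hπpos x).le) hknn f)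
        (Real.rpow_nonneg (supNorm_nonneg f) _)⟩


end
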